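/- Let P be a finite poset on n elements and ω : P → Fin n satisfy: (1) |{x : ω(x) ≤ i}| ≥ i+1 for all i, (2) x > y implies ω(x) ≤ ω(y), and (3) there do not exist x, y, z in P with x < z, y < z, x incomparable to y, and ω(x) < ω(y). Then |Λmin| = |Λmax|, where Λmin and Λmax are the minimal and maximal ω-legal permutations under the lexicographic-by-entries order. -/

import Mathlib

open scoped Classical

/-- `σ` is `ω`-legal: the label of the entry at each position is at most the position. -/
def OmegaLegal {n : ℕ} {P : Type*} [PartialOrder P] (ω : P → Fin n) (σ : Fin n ≃ P) : Prop :=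
  ∀ i : Fin n, ω (σ i) ≤ i

/-- `σ > π` : at the first position where they differ, the entry of `σ` is greater. -/
def PermGt {n : ℕ} {P : Type*} [PartialOrder P] (σ π : Fin n ≃ P) : Prop :=
  ∃ j : Fin n, π j < σ j ∧ ∀ i : Fin n, i < j → σ i = π i

set_option linter.unusedSectionVars false
set_option maxHeartbeats 1600000

universe u

section Aux
variable {P : Type u} [PartialOrder P]

def LegalN {n : ℕ} (w : P → ℕ) (σ : Fin n ≃ P) : Prop := ∀ i : Fin n, w (σ i) ≤ i.1

def MinC {n : ℕ} (w : P → ℕ) (σ : Fin n ≃ P) : Prop :=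
  ∀ j k : Fin n, j < k → ¬(σ k < σ j ∧ w (σ k) ≤ j.1)

def MaxC {n : ℕ} (σ : Fin n ≃ P) : Prop := ∀ j k : Fin n, j < k → ¬ σ j < σ k

/-- Bundled "minimal" predicate (kept opaque to keep decidability instances uniform). -/
def MinP {n : ℕ} (w : P → ℕ) (σ : Fin n ≃ P) : Prop := LegalN w σ ∧ MinC w σ

/-- Bundled "maximal" predicate. -/
def MaxP {n : ℕ} (w : P → ℕ) (σ : Fin n ≃ P) : Prop := LegalN w σ ∧ MaxC σ

/-- `σ` is minimal iff no legal swap decreases it. -/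
lemma min_char {n : ℕ} (ω : P → Fin n) (σ : Fin n ≃ P) :
    (OmegaLegal ω σ ∧ ¬ ∃ σ' : Fin n ≃ P, OmegaLegal ω σ' ∧ PermGt σ σ') ↔
      (OmegaLegal ω σ ∧ MinC (fun x => (ω x).1) σ) := by
  constructor
  · rintro ⟨hleg, hno⟩
    refine ⟨hleg, ?_⟩
    rintro j k hjk ⟨hlt, hw⟩
    apply hno
    refine ⟨(Equiv.swap j k).trans σ, ?_, ?_⟩
    · intro i
      rcases eq_or_ne i j with rfl | hij
      · simpa [Equiv.trans_apply, Equiv.swap_apply_left] using Fin.le_def.mpr hw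
      rcases eq_or_ne i k with rfl | hik
      · simpa [Equiv.trans_apply, Equiv.swap_apply_right] using le_trans (hleg j) (le_of_lt hjk)
      · simpa [Equiv.trans_apply, Equiv.swap_apply_of_ne_of_ne hij hik] using hleg i
    · refine ⟨j, ?_, ?_⟩
      · simpa [Equiv.trans_apply, Equiv.swap_apply_left] using hlt
      · intro i hi
        simp [Equiv.trans_apply,
          Equiv.swap_apply_of_ne_of_ne (ne_of_lt hi) (ne_of_lt (lt_trans hi hjk))]
  · rintro ⟨hleg, hmin⟩
    refine ⟨hleg, ?_⟩
    rintro ⟨σ', hleg', j, hjlt, hagree⟩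
    set k := σ.symm (σ' j) with hkdef
    have hk : σ k = σ' j := σ.apply_symm_apply _
    have hjk : j ≠ k := by
      intro e
      rw [← e] at hk
      exact absurd hk (ne_of_gt hjlt)
    have hjk' : j < k := by
      rcases lt_or_gt_of_ne hjk with h | h
      · exact h
      · exfalso
        have := hagree k h
        rw [hk] at this
        exact hjk (σ'.injective this.symm).symm
    exact hmin j k hjk' ⟨by rw [hk]; exact hjlt, by rw [hk]; exact Fin.le_def.mp (hleg' j)⟩

/-- `σ` is maximal iff it is a legal dual linear extension. -/
lemma max_char {n : ℕ} (ω : P → Fin n) (h2 : ∀ x y : P, y < x → ω x ≤ ω y) (σ : Fin n ≃ P) :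
    (OmegaLegal ω σ ∧ ¬ ∃ σ' : Fin n ≃ P, OmegaLegal ω σ' ∧ PermGt σ' σ) ↔
      (OmegaLegal ω σ ∧ MaxC σ) := by
  constructor
  · rintro ⟨hleg, hno⟩
    refine ⟨hleg, ?_⟩
    intro j k hjk hlt
    apply hno
    refine ⟨(Equiv.swap j k).trans σ, ?_, ?_⟩
    · intro i
      rcases eq_or_ne i j with rfl | hij
      · simpa [Equiv.trans_apply, Equiv.swap_apply_left] using le_trans (h2 _ _ hlt) (hleg i)
      rcases eq_or_ne i k with rfl | hik
      · simpa [Equiv.trans_apply, Equiv.swap_apply_right] using le_trans (hleg j) (le_of_lt hjk)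
      · simpa [Equiv.trans_apply, Equiv.swap_apply_of_ne_of_ne hij hik] using hleg i
    · refine ⟨j, ?_, ?_⟩
      · simpa [Equiv.trans_apply, Equiv.swap_apply_left] using hlt
      · intro i hi
        simp [Equiv.trans_apply,
          Equiv.swap_apply_of_ne_of_ne (ne_of_lt hi) (ne_of_lt (lt_trans hi hjk))]
  · rintro ⟨hleg, hmax⟩
    refine ⟨hleg, ?_⟩
    rintro ⟨σ', hleg', j, hjlt, hagree⟩
    set k := σ.symm (σ' j) with hkdef
    have hk : σ k = σ' j := σ.apply_symm_apply _
    have hjk : j ≠ k := by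
      intro e
      rw [← e] at hk
      exact absurd hk (ne_of_lt hjlt)
    have hjk' : j < k := by
      rcases lt_or_gt_of_ne hjk with h | h
      · exact h
      · exfalso
        have := hagree k h
        rw [hk] at this
        exact hjk (σ'.injective this).symm
    exact hmax j k hjk' (by rw [hk]; exact hjlt)

end Aux

section ConsTail
variable {P : Type u} [PartialOrder P]

/-- The poset with one element removed (as an opaque definition, so that typeclass
resolution produces uniform instances). -/
def PSub (P : Type u) [PartialOrder P] (u : P) : Type u := {z : P // z ≠ u}

instance {u : P} : PartialOrder (PSub P u) :=
  inferInstanceAs (PartialOrder {z : P // z ≠ u})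

noncomputable instance {u : P} [Fintype P] : Fintype (PSub P u) :=
  inferInstanceAs (Fintype {z : P // z ≠ u})

noncomputable def consAt {n : ℕ} (u : P) (ρ : Fin n ≃ PSub P u) : Fin (n + 1) ≃ P where
  toFun j := if h : j = 0 then u else (ρ (j.pred h)).1
  invFun z := if h : z = u then 0 else (ρ.symm ⟨z, h⟩).succ
  left_inv j := by
    rcases eq_or_ne j 0 with rfl | hj
    · simp
    · simp only [dif_neg hj]
      have h1 : (ρ (j.pred hj)).1 ≠ u := (ρ (j.pred hj)).2
      simp only [dif_neg h1, Subtype.coe_eta, Equiv.symm_apply_apply, Fin.succ_pred]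
      show (ρ.symm (ρ (j.pred hj))).succ = j
      rw [Equiv.symm_apply_apply, Fin.succ_pred]
  right_inv z := by
    rcases eq_or_ne z u with rfl | hz
    · simp
    · simp only [dif_neg hz, dif_neg (Fin.succ_ne_zero _), Fin.pred_succ,
        Equiv.apply_symm_apply]
      exact congrArg Subtype.val (ρ.apply_symm_apply _)

lemma consAt_zero {n : ℕ} (u : P) (ρ : Fin n ≃ PSub P u) : consAt u ρ 0 = u := by
  show (if h : (0 : Fin (n+1)) = 0 then u else (ρ (Fin.pred 0 h)).1) = u
  rw [dif_pos rfl]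

lemma consAt_succ {n : ℕ} (u : P) (ρ : Fin n ≃ PSub P u) (i : Fin n) :
    consAt u ρ i.succ = (ρ i).1 := by
  show (if h : i.succ = 0 then u else (ρ (Fin.pred i.succ h)).1) = _
  rw [dif_neg (Fin.succ_ne_zero i), Fin.pred_succ]

def tailAt {n : ℕ} (u : P) (σ : Fin (n + 1) ≃ P) (h : σ 0 = u) : Fin n ≃ PSub P u where
  toFun i := ⟨σ i.succ, fun e => Fin.succ_ne_zero i (σ.injective (by rw [e, h]))⟩
  invFun z := (σ.symm z.1).pred (fun e => z.2 (((Equiv.symm_apply_eq σ).mp e).trans h))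
  left_inv i := by simp
  right_inv z := by
    apply Subtype.ext
    simp

lemma tailAt_coe {n : ℕ} (u : P) (σ : Fin (n + 1) ≃ P) (h : σ 0 = u) (i : Fin n) :
    (tailAt u σ h i).1 = σ i.succ := rfl

lemma cons_tailAt {n : ℕ} (u : P) (σ : Fin (n + 1) ≃ P) (h : σ 0 = u) :
    consAt u (tailAt u σ h) = σ := by
  apply Equiv.ext
  intro j
  rcases Fin.eq_zero_or_eq_succ j with rfl | ⟨i, rfl⟩
  · rw [consAt_zero, h]
  · rw [consAt_succ, tailAt_coe]

lemma tailAt_cons {n : ℕ} (u : P) (ρ : Fin n ≃ PSub P u) (h : consAt u ρ 0 = u) :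
    tailAt u (consAt u ρ) h = ρ := by
  apply Equiv.ext
  intro i
  apply Subtype.ext
  rw [tailAt_coe, consAt_succ]

lemma fiber_card {n : ℕ} [Fintype P] (u : P)
    (Q : (Fin (n + 1) ≃ P) → Prop) (Q' : (Fin n ≃ PSub P u) → Prop)
    [DecidablePred Q] [DecidablePred Q']
    (hQ : ∀ (σ : Fin (n + 1) ≃ P) (h : σ 0 = u), Q σ ↔ Q' (tailAt u σ h)) :
    (Finset.univ.filter fun σ : Fin (n + 1) ≃ P => Q σ ∧ σ 0 = u).card =
      (Finset.univ.filter fun ρ : Fin n ≃ PSub P u => Q' ρ).card := by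
  refine Finset.card_bij'
    (fun σ hσ => tailAt u σ (Finset.mem_filter.mp hσ).2.2)
    (fun ρ _ => consAt u ρ) ?_ ?_ ?_ ?_
  · intro σ hσ
    obtain ⟨-, hQσ, h0⟩ := Finset.mem_filter.mp hσ
    exact Finset.mem_filter.mpr ⟨Finset.mem_univ _, (hQ σ h0).mp hQσ⟩
  · intro ρ hρ
    obtain ⟨-, hQ'ρ⟩ := Finset.mem_filter.mp hρ
    refine Finset.mem_filter.mpr ⟨Finset.mem_univ _, ?_, consAt_zero u ρ⟩
    rw [hQ (consAt u ρ) (consAt_zero u ρ), tailAt_cons]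
    exact hQ'ρ
  · intro σ hσ
    exact cons_tailAt u σ _
  · intro ρ hρ
    exact tailAt_cons u ρ _

lemma decomp_card {n : ℕ} [Fintype P] (Q : (Fin (n + 1) ≃ P) → Prop) [DecidablePred Q]
    (S : Finset P)
    (hS : ∀ σ : Fin (n + 1) ≃ P, Q σ → σ 0 ∈ S) :
    (Finset.univ.filter Q).card =
      ∑ u ∈ S, (Finset.univ.filter fun σ : Fin (n + 1) ≃ P => Q σ ∧ σ 0 = u).card := by
  rw [Finset.card_eq_sum_card_fiberwise
    (f := fun σ : Fin (n + 1) ≃ P => σ 0) (t := S)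
    (fun σ hσ => hS σ (Finset.mem_filter.mp hσ).2)]
  refine Finset.sum_congr rfl fun u _ => ?_
  rw [Finset.filter_filter]

lemma exists_index_succ {n : ℕ} (σ : Fin (n + 1) ≃ P) (y : P) (hy : y ≠ σ 0) :
    ∃ i : Fin n, σ i.succ = y := by
  refine ⟨(σ.symm y).pred (fun e => hy ?_), by rw [Fin.succ_pred, Equiv.apply_symm_apply]⟩
  rw [← σ.apply_symm_apply y, e]

end ConsTail

section Theta
variable {P : Type u} [PartialOrder P]

def LegalT {n : ℕ} (w : P → ℕ) (σ : Fin (n + 1) ≃ P) : Prop :=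
  ∀ i : Fin n, w (σ i.succ) - 1 ≤ i.1

def MaxT {n : ℕ} (σ : Fin (n + 1) ≃ P) : Prop :=
  ∀ j k : Fin n, j < k → ¬ σ j.succ < σ k.succ

def QA {n : ℕ} (w : P → ℕ) (σ : Fin (n + 1) ≃ P) : Prop :=
  (∃ y, w y = 0 ∧ y < σ 0) ∧ w (σ 0) = 0 ∧ LegalT w σ ∧ MaxT σ

def QB {n : ℕ} (w : P → ℕ) (σ : Fin (n + 1) ≃ P) : Prop :=
  (∃ z, σ 0 < z) ∧ w (σ 0) = 0 ∧ LegalT w σ ∧ MaxT σ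

noncomputable def pickSet {n : ℕ} (σ : Fin (n + 1) ≃ P) : Finset (Fin n) :=
  Finset.univ.filter fun i : Fin n => σ i.succ < σ 0

lemma pickSet_ne {n : ℕ} (σ : Fin (n + 1) ≃ P) (hA : ∃ i : Fin n, σ i.succ < σ 0) :
    (pickSet σ).Nonempty := by
  obtain ⟨i, hi⟩ := hA
  exact ⟨i, Finset.mem_filter.mpr ⟨Finset.mem_univ _, hi⟩⟩

noncomputable def pick {n : ℕ} (σ : Fin (n + 1) ≃ P)
    (hA : ∃ i : Fin n, σ i.succ < σ 0) : Fin n :=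
  (pickSet σ).min' (pickSet_ne σ hA)

lemma pick_spec {n : ℕ} (σ : Fin (n + 1) ≃ P) (hA : ∃ i : Fin n, σ i.succ < σ 0) :
    σ (pick σ hA).succ < σ 0 :=
  (Finset.mem_filter.mp (Finset.min'_mem (pickSet σ) (pickSet_ne σ hA))).2

lemma pick_min {n : ℕ} (σ : Fin (n + 1) ≃ P) (hA : ∃ i : Fin n, σ i.succ < σ 0)
    (i : Fin n) (hi : σ i.succ < σ 0) : pick σ hA ≤ i :=
  Finset.min'_le (pickSet σ) i (Finset.mem_filter.mpr ⟨Finset.mem_univ _, hi⟩)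

noncomputable def qickSet {n : ℕ} (σ : Fin (n + 1) ≃ P) : Finset (Fin n) :=
  Finset.univ.filter fun i : Fin n => σ 0 < σ i.succ

lemma qickSet_ne {n : ℕ} (σ : Fin (n + 1) ≃ P) (hB : ∃ i : Fin n, σ 0 < σ i.succ) :
    (qickSet σ).Nonempty := by
  obtain ⟨i, hi⟩ := hB
  exact ⟨i, Finset.mem_filter.mpr ⟨Finset.mem_univ _, hi⟩⟩

noncomputable def qick {n : ℕ} (σ : Fin (n + 1) ≃ P)
    (hB : ∃ i : Fin n, σ 0 < σ i.succ) : Fin n :=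
  (qickSet σ).max' (qickSet_ne σ hB)

lemma qick_spec {n : ℕ} (σ : Fin (n + 1) ≃ P) (hB : ∃ i : Fin n, σ 0 < σ i.succ) :
    σ 0 < σ (qick σ hB).succ :=
  (Finset.mem_filter.mp (Finset.max'_mem (qickSet σ) (qickSet_ne σ hB))).2

lemma qick_max {n : ℕ} (σ : Fin (n + 1) ≃ P) (hB : ∃ i : Fin n, σ 0 < σ i.succ)
    (i : Fin n) (hi : σ 0 < σ i.succ) : i ≤ qick σ hB :=
  Finset.le_max' (qickSet σ) i (Finset.mem_filter.mpr ⟨Finset.mem_univ _, hi⟩)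

noncomputable def thetaF {n : ℕ} (σ : Fin (n + 1) ≃ P) : Fin (n + 1) ≃ P :=
  if hA : ∃ i : Fin n, σ i.succ < σ 0 then (Equiv.swap 0 (pick σ hA).succ).trans σ else σ

noncomputable def thetaG {n : ℕ} (σ : Fin (n + 1) ≃ P) : Fin (n + 1) ≃ P :=
  if hB : ∃ i : Fin n, σ 0 < σ i.succ then (Equiv.swap 0 (qick σ hB).succ).trans σ else σ

lemma thetaF_eq {n : ℕ} (σ : Fin (n + 1) ≃ P) (hA : ∃ i : Fin n, σ i.succ < σ 0) :
    thetaF σ = (Equiv.swap 0 (pick σ hA).succ).trans σ := dif_pos hA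

lemma thetaG_eq {n : ℕ} (σ : Fin (n + 1) ≃ P) (hB : ∃ i : Fin n, σ 0 < σ i.succ) :
    thetaG σ = (Equiv.swap 0 (qick σ hB).succ).trans σ := dif_pos hB

lemma swap_zero {n : ℕ} (σ : Fin (n + 1) ≃ P) (p : Fin n) :
    ((Equiv.swap 0 p.succ).trans σ) 0 = σ p.succ := by
  simp [Equiv.trans_apply, Equiv.swap_apply_left]

lemma swap_at {n : ℕ} (σ : Fin (n + 1) ≃ P) (p : Fin n) :
    ((Equiv.swap 0 p.succ).trans σ) p.succ = σ 0 := by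
  simp [Equiv.trans_apply, Equiv.swap_apply_right]

lemma swap_other {n : ℕ} (σ : Fin (n + 1) ≃ P) (p i : Fin n) (hip : i ≠ p) :
    ((Equiv.swap 0 p.succ).trans σ) i.succ = σ i.succ := by
  rw [Equiv.trans_apply,
    Equiv.swap_apply_of_ne_of_ne (Fin.succ_ne_zero i) (fun e => hip (Fin.succ_inj.mp e))]

lemma thetaF_main {n : ℕ} (w : P → ℕ)
    (h2 : ∀ x y : P, y < x → w x ≤ w y)
    (h3 : ∀ x y z : P, x < z → y < z → ¬x ≤ y → ¬y ≤ x → ¬ w x < w y)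
    (σ : Fin (n + 1) ≃ P) (hσ : QA w σ) :
    QB w (thetaF σ) ∧ thetaG (thetaF σ) = σ := by
  obtain ⟨hex, h0, hL, hM⟩ := hσ
  have hA : ∃ i : Fin n, σ i.succ < σ 0 := by
    obtain ⟨y, hy0, hylt⟩ := hex
    obtain ⟨i, hi⟩ := exists_index_succ σ y (ne_of_lt hylt)
    exact ⟨i, by rw [hi]; exact hylt⟩
  set p := pick σ hA with hp
  have hps : σ p.succ < σ 0 := pick_spec σ hA
  have hpm : ∀ i : Fin n, σ i.succ < σ 0 → p ≤ i := pick_min σ hA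
  set τ := (Equiv.swap (0 : Fin (n + 1)) p.succ).trans σ with hτdef
  have hθ : thetaF σ = τ := thetaF_eq σ hA
  have t0 : τ 0 = σ p.succ := swap_zero σ p
  have tp : τ p.succ = σ 0 := swap_at σ p
  have tother : ∀ i : Fin n, i ≠ p → τ i.succ = σ i.succ := swap_other σ p
  have hw0 : w (σ p.succ) = 0 := by
    obtain ⟨y, hy0, hylt⟩ := hex
    obtain ⟨q, hq⟩ := exists_index_succ σ y (ne_of_lt hylt)
    have hqlt : σ q.succ < σ 0 := by rw [hq]; exact hylt
    by_contra hwne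
    have hpqne : p ≠ q := by
      rintro rfl
      exact hwne (by rw [hq, hy0])
    have hplt : p < q := lt_of_le_of_ne (hpm q hqlt) hpqne
    by_cases hby : σ p.succ ≤ y
    · rcases eq_or_lt_of_le hby with e | hlt'
      · exact hwne (by rw [e, hy0])
      · exact hM p q hplt (by rw [hq]; exact hlt')
    · by_cases hyb : y ≤ σ p.succ
      · have hlt2 : y < σ p.succ := lt_of_le_of_ne hyb (fun e => hby (le_of_eq e.symm))
        have := h2 _ _ hlt2
        rw [hy0] at this
        exact hwne (Nat.le_zero.mp this)
      · exact (h3 y (σ p.succ) (σ 0) hylt hps hyb hby)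
          (by rw [hy0]; exact Nat.pos_of_ne_zero hwne)
  rw [hθ]
  refine ⟨⟨⟨σ 0, by rw [t0]; exact hps⟩, by rw [t0]; exact hw0, ?_, ?_⟩, ?_⟩
  · -- LegalT
    intro i
    by_cases hip : i = p
    · subst hip
      rw [tp, h0]
      omega
    · rw [tother i hip]
      exact hL i
  · -- MaxT
    intro j k hjk hlt
    by_cases hkp : k = p
    · subst hkp
      rw [tother j (ne_of_lt hjk), tp] at hlt
      exact absurd (hpm j hlt) (not_le.mpr hjk)
    · by_cases hjp : j = p
      · subst hjp
        rw [tp, tother k hkp] at hlt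
        exact hM p k hjk (lt_trans hps hlt)
      · rw [tother j hjp, tother k hkp] at hlt
        exact hM j k hjk hlt
  · -- round trip
    have hB' : ∃ i : Fin n, τ 0 < τ i.succ := ⟨p, by rw [t0, tp]; exact hps⟩
    have hqp : qick τ hB' = p := by
      refine le_antisymm ?_ (qick_max τ hB' p (by rw [t0, tp]; exact hps))
      by_contra hcon
      have hplt : p < qick τ hB' := not_le.mp hcon
      have := qick_spec τ hB'
      rw [t0, tother _ (ne_of_gt hplt)] at this
      exact hM p _ hplt this
    rw [thetaG_eq τ hB', hqp, hτdef]
    apply Equiv.ext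
    intro x
    simp [Equiv.trans_apply, Equiv.swap_apply_self]

lemma thetaG_main {n : ℕ} (w : P → ℕ)
    (h2 : ∀ x y : P, y < x → w x ≤ w y)
    (τ : Fin (n + 1) ≃ P) (hτ : QB w τ) :
    QA w (thetaG τ) ∧ thetaF (thetaG τ) = τ := by
  obtain ⟨hex, h0, hL, hM⟩ := hτ
  have hB : ∃ i : Fin n, τ 0 < τ i.succ := by
    obtain ⟨z, hz⟩ := hex
    obtain ⟨i, hi⟩ := exists_index_succ τ z (ne_of_gt hz)
    exact ⟨i, by rw [hi]; exact hz⟩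
  set q := qick τ hB with hq
  have hqs : τ 0 < τ q.succ := qick_spec τ hB
  have hqm : ∀ i : Fin n, τ 0 < τ i.succ → i ≤ q := qick_max τ hB
  set σ' := (Equiv.swap (0 : Fin (n + 1)) q.succ).trans τ with hσdef
  have hθ : thetaG τ = σ' := thetaG_eq τ hB
  have s0 : σ' 0 = τ q.succ := swap_zero τ q
  have sq : σ' q.succ = τ 0 := swap_at τ q
  have sother : ∀ i : Fin n, i ≠ q → σ' i.succ = τ i.succ := swap_other τ q
  have hw0 : w (τ q.succ) = 0 := by
    have := h2 _ _ hqs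
    rw [h0] at this
    exact Nat.le_zero.mp this
  rw [hθ]
  refine ⟨⟨⟨τ 0, h0, by rw [s0]; exact hqs⟩, by rw [s0]; exact hw0, ?_, ?_⟩, ?_⟩
  · -- LegalT
    intro i
    by_cases hiq : i = q
    · subst hiq
      rw [sq, h0]
      omega
    · rw [sother i hiq]
      exact hL i
  · -- MaxT
    intro j k hjk hlt
    by_cases hkq : k = q
    · subst hkq
      rw [sother j (ne_of_lt hjk), sq] at hlt
      exact hM j q hjk (lt_trans hlt hqs)
    · by_cases hjq : j = q
      · subst hjq
        rw [sq, sother k hkq] at hlt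
        exact absurd (hqm k hlt) (not_le.mpr hjk)
      · rw [sother j hjq, sother k hkq] at hlt
        exact hM j k hjk hlt
  · -- round trip
    have hA' : ∃ i : Fin n, σ' i.succ < σ' 0 := ⟨q, by rw [s0, sq]; exact hqs⟩
    have hpq : pick σ' hA' = q := by
      refine le_antisymm (pick_min σ' hA' q (by rw [s0, sq]; exact hqs)) ?_
      by_contra hcon
      have hqlt : pick σ' hA' < q := not_le.mp hcon
      have := pick_spec σ' hA'
      rw [s0, sother _ (ne_of_lt hqlt)] at this
      exact hM _ q hqlt this
    rw [thetaF_eq σ' hA', hpq, hσdef]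
    apply Equiv.ext
    intro x
    simp [Equiv.trans_apply, Equiv.swap_apply_self]

lemma theta_card {n : ℕ} [Fintype P] (w : P → ℕ)
    [DecidablePred fun σ : Fin (n + 1) ≃ P => QA w σ]
    [DecidablePred fun σ : Fin (n + 1) ≃ P => QB w σ]
    (h2 : ∀ x y : P, y < x → w x ≤ w y)
    (h3 : ∀ x y z : P, x < z → y < z → ¬x ≤ y → ¬y ≤ x → ¬ w x < w y) :
    (Finset.univ.filter fun σ : Fin (n + 1) ≃ P => QA w σ).card =
      (Finset.univ.filter fun σ : Fin (n + 1) ≃ P => QB w σ).card := by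
  refine Finset.card_bij' (fun σ _ => thetaF σ) (fun σ _ => thetaG σ) ?_ ?_ ?_ ?_
  · intro σ hσ
    exact Finset.mem_filter.mpr ⟨Finset.mem_univ _,
      (thetaF_main w h2 h3 σ (Finset.mem_filter.mp hσ).2).1⟩
  · intro τ hτ
    exact Finset.mem_filter.mpr ⟨Finset.mem_univ _,
      (thetaG_main w h2 τ (Finset.mem_filter.mp hτ).2).1⟩
  · intro σ hσ
    exact (thetaF_main w h2 h3 σ (Finset.mem_filter.mp hσ).2).2
  · intro τ hτ
    exact (thetaG_main w h2 τ (Finset.mem_filter.mp hτ).2).2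

end Theta

theorem inner_main : ∀ (N : ℕ) (P : Type u) [PartialOrder P] [Fintype P],
    Fintype.card P = N → ∀ (w : P → ℕ),
    (∀ x y : P, y < x → w x ≤ w y) →
    (∀ x y z : P, x < z → y < z → ¬x ≤ y → ¬y ≤ x → ¬ w x < w y) →
    (Finset.univ.filter fun σ : Fin N ≃ P => MinP w σ).card =
      (Finset.univ.filter fun σ : Fin N ≃ P => MaxP w σ).card := by
  intro N
  induction N with
  | zero =>
    intro P _ _ hcard w h2 h3
    have h : ∀ σ : Fin 0 ≃ P, (MinP w σ) ∧ (MaxP w σ) :=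
      fun σ => ⟨⟨fun i => i.elim0, fun j => j.elim0⟩, ⟨fun i => i.elim0, fun j => j.elim0⟩⟩
    rw [Finset.filter_true_of_mem (fun σ _ => (h σ).1),
        Finset.filter_true_of_mem (fun σ _ => (h σ).2)]
  | succ n IH =>
    intro P instPO instFT hcard w h2 h3
    -- the reduced instance data
    have subcard : ∀ u : P, Fintype.card (PSub P u) = n := by
      intro u
      have h := Fintype.card_subtype_compl (p := fun z : P => z = u)
      rw [Fintype.card_subtype_eq, hcard] at h
      have e : PSub P u ≃ {x : P // ¬ x = u} := Equiv.refl _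
      rw [Fintype.card_congr e, h]
      omega
    have h2' : ∀ u : P, ∀ x y : PSub P u, y < x →
        w x.1 - 1 ≤ w y.1 - 1 := by
      intro u x y hyx
      exact Nat.sub_le_sub_right (h2 x.1 y.1 (Subtype.coe_lt_coe.mpr hyx)) 1
    have h3' : ∀ u : P, ∀ x y z : PSub P u, x < z → y < z →
        ¬x ≤ y → ¬y ≤ x → ¬ (w x.1 - 1 < w y.1 - 1) := by
      intro u x y z hxz hyz hxy hyx hlt
      have hxy' : ¬ x.1 ≤ y.1 := fun h => hxy (Subtype.coe_le_coe.mp h)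
      have hyx' : ¬ y.1 ≤ x.1 := fun h => hyx (Subtype.coe_le_coe.mp h)
      have := h3 x.1 y.1 z.1 (Subtype.coe_lt_coe.mpr hxz) (Subtype.coe_lt_coe.mpr hyz) hxy' hyx'
      omega
    -- Λmin decomposition
    have e1 : (Finset.univ.filter fun σ : Fin (n + 1) ≃ P => MinP w σ).card =
        ∑ u ∈ (Finset.univ.filter fun x : P => w x = 0).filter
            (fun x => ¬ ∃ y, w y = 0 ∧ y < x),
          (Finset.univ.filter fun ρ : Fin n ≃ PSub P u =>
            MaxP (fun z => w z.1 - 1) ρ).card := by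
      have hS1 : ∀ σ : Fin (n + 1) ≃ P, (MinP w σ) → σ 0 ∈
          (Finset.univ.filter fun x : P => w x = 0).filter
            (fun x => ¬ ∃ y, w y = 0 ∧ y < x) := by
        rintro σ ⟨hL, hM⟩
        have hw0 : w (σ 0) = 0 := Nat.le_zero.mp (by simpa using hL 0)
        refine Finset.mem_filter.mpr ⟨Finset.mem_filter.mpr ⟨Finset.mem_univ _, hw0⟩, ?_⟩
        rintro ⟨y, hy0, hylt⟩
        obtain ⟨i, hi⟩ := exists_index_succ σ y (ne_of_lt hylt)
        exact hM 0 i.succ (Fin.succ_pos i)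
          ⟨by rw [hi]; exact hylt, by rw [hi, hy0]; exact Nat.zero_le _⟩
      rw [decomp_card _ _ hS1]
      refine Finset.sum_congr rfl fun u hu => ?_
      obtain ⟨hu1, humin⟩ := Finset.mem_filter.mp hu
      obtain ⟨-, hu0⟩ := Finset.mem_filter.mp hu1
      push_neg at humin
      refine Eq.trans (fiber_card u _ (fun ρ : Fin n ≃ PSub P u =>
          MinP (fun z => w z.1 - 1) ρ) ?_)
        (IH (PSub P u) (subcard u) (fun z => w z.1 - 1) (h2' u) (h3' u))
      intro σ h
      constructor
      · rintro ⟨hL, hM⟩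
        constructor
        · intro i
          have := hL i.succ
          rw [Fin.val_succ] at this
          show w (tailAt u σ h i).1 - 1 ≤ i.1
          rw [tailAt_coe]
          omega
        · rintro j k hjk ⟨hlt, hwk⟩
          have hlt' : σ k.succ < σ j.succ := by
            have := Subtype.coe_lt_coe.mpr hlt
            rwa [tailAt_coe, tailAt_coe] at this
          have hwk' : w (σ k.succ) ≤ j.succ.1 := by
            have h5 : w (tailAt u σ h k).1 - 1 ≤ j.1 := hwk
            rw [tailAt_coe] at h5
            rw [Fin.val_succ]
            omega
          exact hM j.succ k.succ (Fin.succ_lt_succ_iff.mpr hjk) ⟨hlt', hwk'⟩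
      · rintro ⟨hL', hM'⟩
        constructor
        · intro i
          rcases Fin.eq_zero_or_eq_succ i with rfl | ⟨i', rfl⟩
          · rw [h, hu0]
            exact Nat.zero_le _
          · have h5 : w (tailAt u σ h i').1 - 1 ≤ i'.1 := hL' i'
            rw [tailAt_coe] at h5
            rw [Fin.val_succ]
            omega
        · rintro j k hjk ⟨hlt, hwk⟩
          rcases Fin.eq_zero_or_eq_succ j with rfl | ⟨j', rfl⟩
          · have hw0 : w (σ k) = 0 := Nat.le_zero.mp (by simpa using hwk)
            exact humin (σ k) hw0 (by rw [← h]; exact hlt)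
          · rcases Fin.eq_zero_or_eq_succ k with rfl | ⟨k', rfl⟩
            · exact absurd hjk (by simp)
            · refine hM' j' k' (Fin.succ_lt_succ_iff.mp hjk) ⟨?_, ?_⟩
              · apply Subtype.coe_lt_coe.mp
                rw [tailAt_coe, tailAt_coe]
                exact hlt
              · show w (tailAt u σ h k').1 - 1 ≤ j'.1
                rw [tailAt_coe]
                rw [Fin.val_succ] at hwk
                omega
    -- Λmax decomposition
    have e2 : (Finset.univ.filter fun σ : Fin (n + 1) ≃ P => MaxP w σ).card =
        ∑ u ∈ (Finset.univ.filter fun x : P => w x = 0).filter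
            (fun x => ¬ ∃ z, x < z),
          (Finset.univ.filter fun ρ : Fin n ≃ PSub P u =>
            MaxP (fun z => w z.1 - 1) ρ).card := by
      have hS2 : ∀ σ : Fin (n + 1) ≃ P, (MaxP w σ) → σ 0 ∈
          (Finset.univ.filter fun x : P => w x = 0).filter
            (fun x => ¬ ∃ z, x < z) := by
        rintro σ ⟨hL, hM⟩
        have hw0 : w (σ 0) = 0 := Nat.le_zero.mp (by simpa using hL 0)
        refine Finset.mem_filter.mpr ⟨Finset.mem_filter.mpr ⟨Finset.mem_univ _, hw0⟩, ?_⟩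
        rintro ⟨z, hz⟩
        obtain ⟨i, hi⟩ := exists_index_succ σ z (ne_of_gt hz)
        exact hM 0 i.succ (Fin.succ_pos i) (by rw [hi]; exact hz)
      rw [decomp_card _ _ hS2]
      refine Finset.sum_congr rfl fun u hu => ?_
      obtain ⟨hu1, humax⟩ := Finset.mem_filter.mp hu
      obtain ⟨-, hu0⟩ := Finset.mem_filter.mp hu1
      push_neg at humax
      refine fiber_card u (fun σ : Fin (n + 1) ≃ P => MaxP w σ)
        (fun ρ : Fin n ≃ PSub P u => MaxP (fun z => w z.1 - 1) ρ) ?_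
      intro σ h
      constructor
      · rintro ⟨hL, hM⟩
        constructor
        · intro i
          have := hL i.succ
          rw [Fin.val_succ] at this
          show w (tailAt u σ h i).1 - 1 ≤ i.1
          rw [tailAt_coe]
          omega
        · intro j k hjk hlt
          have hlt' : σ j.succ < σ k.succ := by
            have := Subtype.coe_lt_coe.mpr hlt
            rwa [tailAt_coe, tailAt_coe] at this
          exact hM j.succ k.succ (Fin.succ_lt_succ_iff.mpr hjk) hlt'
      · rintro ⟨hL', hM'⟩
        constructor
        · intro i
          rcases Fin.eq_zero_or_eq_succ i with rfl | ⟨i', rfl⟩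
          · rw [h, hu0]
            exact Nat.zero_le _
          · have h5 : w (tailAt u σ h i').1 - 1 ≤ i'.1 := hL' i'
            rw [tailAt_coe] at h5
            rw [Fin.val_succ]
            omega
        · intro j k hjk hlt
          rcases Fin.eq_zero_or_eq_succ j with rfl | ⟨j', rfl⟩
          · rw [h] at hlt
            exact humax (σ k) hlt
          · rcases Fin.eq_zero_or_eq_succ k with rfl | ⟨k', rfl⟩
            · exact absurd hjk (by simp)
            · refine hM' j' k' (Fin.succ_lt_succ_iff.mp hjk) ?_
              apply Subtype.coe_lt_coe.mp
              rw [tailAt_coe, tailAt_coe]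
              exact hlt
    -- QA decomposition
    have e3 : (Finset.univ.filter fun σ : Fin (n + 1) ≃ P => QA w σ).card =
        ∑ u ∈ (Finset.univ.filter fun x : P => w x = 0).filter
            (fun x => ∃ y, w y = 0 ∧ y < x),
          (Finset.univ.filter fun ρ : Fin n ≃ PSub P u =>
            MaxP (fun z => w z.1 - 1) ρ).card := by
      have hS3 : ∀ σ : Fin (n + 1) ≃ P, QA w σ → σ 0 ∈
          (Finset.univ.filter fun x : P => w x = 0).filter
            (fun x => ∃ y, w y = 0 ∧ y < x) := by
        rintro σ ⟨hex, h0, -, -⟩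
        exact Finset.mem_filter.mpr ⟨Finset.mem_filter.mpr ⟨Finset.mem_univ _, h0⟩, hex⟩
      rw [decomp_card _ _ hS3]
      refine Finset.sum_congr rfl fun u hu => ?_
      obtain ⟨hu1, huex⟩ := Finset.mem_filter.mp hu
      obtain ⟨-, hu0⟩ := Finset.mem_filter.mp hu1
      refine fiber_card u (fun σ : Fin (n + 1) ≃ P => QA w σ)
        (fun ρ : Fin n ≃ PSub P u => MaxP (fun z => w z.1 - 1) ρ) ?_
      intro σ h
      constructor
      · rintro ⟨-, -, hLT, hMT⟩
        constructor
        · intro i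
          show w (tailAt u σ h i).1 - 1 ≤ i.1
          rw [tailAt_coe]
          exact hLT i
        · intro j k hjk hlt
          refine hMT j k hjk ?_
          have := Subtype.coe_lt_coe.mpr hlt
          rwa [tailAt_coe, tailAt_coe] at this
      · rintro ⟨hL', hM'⟩
        refine ⟨by rw [h]; exact huex, by rw [h]; exact hu0, ?_, ?_⟩
        · intro i
          have h5 : w (tailAt u σ h i).1 - 1 ≤ i.1 := hL' i
          rwa [tailAt_coe] at h5
        · intro j k hjk hlt
          refine hM' j k hjk ?_
          apply Subtype.coe_lt_coe.mp
          rw [tailAt_coe, tailAt_coe]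
          exact hlt
    -- QB decomposition
    have e4 : (Finset.univ.filter fun σ : Fin (n + 1) ≃ P => QB w σ).card =
        ∑ u ∈ (Finset.univ.filter fun x : P => w x = 0).filter
            (fun x => ∃ z, x < z),
          (Finset.univ.filter fun ρ : Fin n ≃ PSub P u =>
            MaxP (fun z => w z.1 - 1) ρ).card := by
      have hS4 : ∀ σ : Fin (n + 1) ≃ P, QB w σ → σ 0 ∈
          (Finset.univ.filter fun x : P => w x = 0).filter
            (fun x => ∃ z, x < z) := by
        rintro σ ⟨hex, h0, -, -⟩
        exact Finset.mem_filter.mpr ⟨Finset.mem_filter.mpr ⟨Finset.mem_univ _, h0⟩, hex⟩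
      rw [decomp_card _ _ hS4]
      refine Finset.sum_congr rfl fun u hu => ?_
      obtain ⟨hu1, huex⟩ := Finset.mem_filter.mp hu
      obtain ⟨-, hu0⟩ := Finset.mem_filter.mp hu1
      refine fiber_card u (fun σ : Fin (n + 1) ≃ P => QB w σ)
        (fun ρ : Fin n ≃ PSub P u => MaxP (fun z => w z.1 - 1) ρ) ?_
      intro σ h
      constructor
      · rintro ⟨-, -, hLT, hMT⟩
        constructor
        · intro i
          show w (tailAt u σ h i).1 - 1 ≤ i.1
          rw [tailAt_coe]
          exact hLT i
        · intro j k hjk hlt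
          refine hMT j k hjk ?_
          have := Subtype.coe_lt_coe.mpr hlt
          rwa [tailAt_coe, tailAt_coe] at this
      · rintro ⟨hL', hM'⟩
        refine ⟨by rw [h]; exact huex, by rw [h]; exact hu0, ?_, ?_⟩
        · intro i
          have h5 : w (tailAt u σ h i).1 - 1 ≤ i.1 := hL' i
          rwa [tailAt_coe] at h5
        · intro j k hjk hlt
          refine hM' j k hjk ?_
          apply Subtype.coe_lt_coe.mp
          rw [tailAt_coe, tailAt_coe]
          exact hlt
    -- partition identities
    have e5 := Finset.sum_filter_add_sum_filter_not
      (Finset.univ.filter fun x : P => w x = 0) (fun x => ∃ y, w y = 0 ∧ y < x)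
      (fun u => (Finset.univ.filter fun ρ : Fin n ≃ PSub P u =>
        MaxP (fun z => w z.1 - 1) ρ).card)
    have e6 := Finset.sum_filter_add_sum_filter_not
      (Finset.univ.filter fun x : P => w x = 0) (fun x => ∃ z, x < z)
      (fun u => (Finset.univ.filter fun ρ : Fin n ≃ PSub P u =>
        MaxP (fun z => w z.1 - 1) ρ).card)
    have e7 := theta_card (n := n) (P := P) w h2 h3
    rw [e1, e2]
    omega

lemma filter_card_iff {α : Type*} [Fintype α] (p q : α → Prop)
    [DecidablePred p] [DecidablePred q] (h : ∀ a, p a ↔ q a) :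
    (Finset.univ.filter p).card = (Finset.univ.filter q).card := by
  congr 1
  ext a
  simp only [Finset.mem_filter, Finset.mem_univ, true_and]
  exact h a

theorem card_min_eq_card_max {n : ℕ} {P : Type*} [PartialOrder P] [Fintype P]
    (hcard : Fintype.card P = n) (ω : P → Fin n)
    (h1 : ∀ i : Fin n, (i : ℕ) + 1 ≤ (Finset.univ.filter fun x : P => ω x ≤ i).card)
    (h2 : ∀ x y : P, y < x → ω x ≤ ω y)
    (h3 : ¬ ∃ x y z : P, x < z ∧ y < z ∧ ¬ x ≤ y ∧ ¬ y ≤ x ∧ ω x < ω y) :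
    (Finset.univ.filter fun σ : Fin n ≃ P =>
        OmegaLegal ω σ ∧ ¬ ∃ σ' : Fin n ≃ P, OmegaLegal ω σ' ∧ PermGt σ σ').card =
      (Finset.univ.filter fun σ : Fin n ≃ P =>
        OmegaLegal ω σ ∧ ¬ ∃ σ' : Fin n ≃ P, OmegaLegal ω σ' ∧ PermGt σ' σ).card := by
  have hL : ∀ σ : Fin n ≃ P, OmegaLegal ω σ ↔ LegalN (fun x => (ω x).1) σ := by
    intro σ
    exact forall_congr' fun i => Fin.le_def
  have h2' : ∀ x y : P, y < x → (ω x).1 ≤ (ω y).1 := fun x y h => Fin.le_def.mp (h2 x y h)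
  have h3' : ∀ x y z : P, x < z → y < z → ¬x ≤ y → ¬y ≤ x →
      ¬ (ω x).1 < (ω y).1 := by
    intro x y z hxz hyz hxy hyx hlt
    exact h3 ⟨x, y, z, hxz, hyz, hxy, hyx, Fin.lt_def.mpr hlt⟩
  have step1 : (Finset.univ.filter fun σ : Fin n ≃ P =>
      OmegaLegal ω σ ∧ ¬ ∃ σ' : Fin n ≃ P, OmegaLegal ω σ' ∧ PermGt σ σ').card =
      (Finset.univ.filter fun σ : Fin n ≃ P => MinP (fun x => (ω x).1) σ).card := by
    refine filter_card_iff _ _ fun σ => ?_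
    exact (min_char ω σ).trans (and_congr_left' (hL σ))
  have step3 : (Finset.univ.filter fun σ : Fin n ≃ P =>
      OmegaLegal ω σ ∧ ¬ ∃ σ' : Fin n ≃ P, OmegaLegal ω σ' ∧ PermGt σ' σ).card =
      (Finset.univ.filter fun σ : Fin n ≃ P => MaxP (fun x => (ω x).1) σ).card := by
    refine filter_card_iff _ _ fun σ => ?_
    exact (max_char ω h2 σ).trans (and_congr_left' (hL σ))
  rw [step1, step3]
  exact inner_main n P hcard (fun x => (ω x).1) h2' h3'
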